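/- For Y ∈ sp(4) (Y* = -Y and Yᵀ J₄ = -J₄ Y), the characteristic polynomial of Y equals x⁴ + (½‖Y‖_F²)x² + det(Y), where ‖Y‖_F² = Tr(Y*Y). -/

import Mathlib

open Matrix Polynomial

set_option maxHeartbeats 2000000 in
private lemma charpoly_sp4_key (a b c d p q r s t u : ℂ) :
    (!![a,b,p,q; c,d,q,r; s,t,-a,-c; t,u,-b,-d]).charpoly
    = X^4 + C ((1/2) * ((-(!![a,b,p,q; c,d,q,r; s,t,-a,-c; t,u,-b,-d]) *
        !![a,b,p,q; c,d,q,r; s,t,-a,-c; t,u,-b,-d]).trace)) * X^2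
      + C ((!![a,b,p,q; c,d,q,r; s,t,-a,-c; t,u,-b,-d]).det) := by
  have hc : charmatrix (!![a,b,p,q; c,d,q,r; s,t,-a,-c; t,u,-b,-d]) =
      !![X - C a, -C b, -C p, -C q;
         -C c, X - C d, -C q, -C r;
         -C s, -C t, X + C a, C c;
         -C t, -C u, C b, X + C d] := by
    ext i j
    fin_cases i <;> fin_cases j <;>
      simp [charmatrix_apply_eq, charmatrix_apply_ne]
  rw [Matrix.charpoly, hc]
  have ht : (1/2 : ℂ) * (-(!![a,b,p,q; c,d,q,r; s,t,-a,-c; t,u,-b,-d]) *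
        !![a,b,p,q; c,d,q,r; s,t,-a,-c; t,u,-b,-d]).trace =
      -(a*a + d*d + 2*(b*c) + p*s + 2*(q*t) + r*u) := by
    simp [Matrix.trace, Matrix.mul_apply, Fin.sum_univ_succ]
    ring
  rw [ht]
  have hd : (!![a,b,p,q; c,d,q,r; s,t,-a,-c; t,u,-b,-d]).det =
      a*(d*(a*d-c*b) - q*(-(t*d)+u*c) + r*(-(t*b)+u*a))
       - b*(c*(a*d-c*b) - q*(-(s*d)+t*c) + r*(-(s*b)+t*a))
       + p*(c*(-(t*d)+u*c) - d*(-(s*d)+t*c) + r*(s*u-t*t))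
       - q*(c*(-(t*b)+u*a) - d*(-(s*b)+t*a) + q*(s*u-t*t)) := by
    simp [Matrix.det_succ_row_zero, Fin.sum_univ_succ]
    simp [Fin.succAbove, Fin.lt_def]
    ring
  rw [hd]
  simp only [Matrix.det_succ_row_zero, Fin.sum_univ_succ, Fin.sum_univ_zero,
    Matrix.cons_val_zero, Matrix.cons_val_succ, Matrix.submatrix_apply,
    Fin.succ_zero_eq_one, map_add, _root_.map_mul, map_neg, map_sub, map_ofNat,
    Matrix.cons_val', Matrix.cons_val_fin_one, Matrix.empty_val',
    Fin.succAbove, Fin.castSucc, Fin.castAdd, Fin.castLE, Fin.lt_def,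
    Matrix.head_cons, Matrix.head_fin_const]
  norm_num
  simp only [Matrix.cons_val]
  ring

set_option maxHeartbeats 1000000 in
private lemma charpoly_sp4_key' (a b c d p q r s t u : ℂ) :
    (fromBlocks !![a,b;c,d] !![p,q;q,r] !![s,t;t,u] !![-a,-c;-b,-d]).charpoly
    = X^4 + C ((1/2) * ((-(fromBlocks !![a,b;c,d] !![p,q;q,r] !![s,t;t,u] !![-a,-c;-b,-d]) *
        fromBlocks !![a,b;c,d] !![p,q;q,r] !![s,t;t,u] !![-a,-c;-b,-d]).trace)) * X^2
      + C ((fromBlocks !![a,b;c,d] !![p,q;q,r] !![s,t;t,u] !![-a,-c;-b,-d]).det) := by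
  have hre : reindex finSumFinEquiv finSumFinEquiv
      (fromBlocks !![a,b;c,d] !![p,q;q,r] !![s,t;t,u] !![-a,-c;-b,-d])
      = !![a,b,p,q; c,d,q,r; s,t,-a,-c; t,u,-b,-d] := by
    ext i j
    fin_cases i <;> fin_cases j <;> rfl
  have htr : (-(fromBlocks !![a,b;c,d] !![p,q;q,r] !![s,t;t,u] !![-a,-c;-b,-d]) *
        fromBlocks !![a,b;c,d] !![p,q;q,r] !![s,t;t,u] !![-a,-c;-b,-d]).trace
      = (-(!![a,b,p,q; c,d,q,r; s,t,-a,-c; t,u,-b,-d]) *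
        !![a,b,p,q; c,d,q,r; s,t,-a,-c; t,u,-b,-d]).trace := by
    simp [Matrix.trace, Matrix.diag, Fintype.sum_sum_type, Fin.sum_univ_succ,
      Matrix.mul_apply, Matrix.fromBlocks, Matrix.neg_apply]
    ring
  rw [← charpoly_reindex finSumFinEquiv, hre, ← det_reindex_self finSumFinEquiv, hre, htr]
  exact charpoly_sp4_key a b c d p q r s t u

theorem charpoly_sp4
    (Y : Matrix (Fin 2 ⊕ Fin 2) (Fin 2 ⊕ Fin 2) ℂ)
    (J : Matrix (Fin 2 ⊕ Fin 2) (Fin 2 ⊕ Fin 2) ℂ)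
    (hJ : J = fromBlocks 0 1 (-1) 0)
    (hanti : Yᴴ = -Y) (hsymp : Yᵀ * J = -(J * Y)) :
    Y.charpoly = Polynomial.X ^ 4
      + Polynomial.C ((1 / 2 : ℂ) * (Yᴴ * Y).trace) * Polynomial.X ^ 2
      + Polynomial.C Y.det := by
  rw [hJ, ← fromBlocks_toBlocks Y] at hsymp
  rw [fromBlocks_transpose, fromBlocks_multiply, fromBlocks_multiply,
    Matrix.fromBlocks_neg] at hsymp
  simp only [Matrix.mul_zero, Matrix.mul_one, Matrix.mul_neg, zero_add, add_zero,
    Matrix.zero_mul, Matrix.one_mul, Matrix.neg_mul, neg_neg] at hsymp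
  rw [fromBlocks_inj] at hsymp
  obtain ⟨h1, h2, h3, h4⟩ := hsymp
  -- h1 : -Y.toBlocks₂₁ᵀ = -Y.toBlocks₂₁ ; h2 : Y.toBlocks₁₁ᵀ = -Y.toBlocks₂₂
  -- h3 : -Y.toBlocks₂₂ᵀ = Y.toBlocks₁₁ ; h4 : Y.toBlocks₁₂ᵀ = Y.toBlocks₁₂
  have hB : Y (Sum.inl 1) (Sum.inr 0) = Y (Sum.inl 0) (Sum.inr 1) := by
    have := congrFun (congrFun h4 0) 1
    simpa [Matrix.toBlocks₁₂, Matrix.transpose_apply] using this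
  have hC : Y (Sum.inr 1) (Sum.inl 0) = Y (Sum.inr 0) (Sum.inl 1) := by
    have := congrFun (congrFun h1 0) 1
    simpa [Matrix.toBlocks₂₁, Matrix.transpose_apply] using this
  have hD : ∀ i j, Y (Sum.inr i) (Sum.inr j) = -Y (Sum.inl j) (Sum.inl i) := by
    intro i j
    have := congrFun (congrFun h2 i) j
    simp only [Matrix.toBlocks₁₁, Matrix.toBlocks₂₂, Matrix.transpose_apply,
      Matrix.neg_apply, Matrix.of_apply] at this
    linear_combination this
  set a := Y (Sum.inl 0) (Sum.inl 0) with ha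
  set b := Y (Sum.inl 0) (Sum.inl 1) with hb
  set c := Y (Sum.inl 1) (Sum.inl 0) with hc
  set d := Y (Sum.inl 1) (Sum.inl 1) with hd
  set p := Y (Sum.inl 0) (Sum.inr 0) with hp
  set q := Y (Sum.inl 0) (Sum.inr 1) with hq
  set r := Y (Sum.inl 1) (Sum.inr 1) with hr
  set s := Y (Sum.inr 0) (Sum.inl 0) with hs
  set t := Y (Sum.inr 0) (Sum.inl 1) with ht
  set u := Y (Sum.inr 1) (Sum.inl 1) with hu
  have hY : Y = fromBlocks !![a,b;c,d] !![p,q;q,r] !![s,t;t,u] !![-a,-c;-b,-d] := by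
    ext i j
    rcases i with i|i <;> rcases j with j|j <;> fin_cases i <;> fin_cases j <;>
      simp [Matrix.fromBlocks, hB, hC, hD, ← ha, ← hb, ← hc, ← hd, ← hp, ← hq, ← hr,
        ← hs, ← ht, ← hu]
  rw [hanti, hY]
  exact charpoly_sp4_key' a b c d p q r s t u
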